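/- With the setup of the preceding construction, each state |φ_{n,m,l}⟩ = (1/√(d₁d₂)) Σ_{i,j} ω_{d₁}^{ni} ω_{d₂}^{mj} |i⟩ ⊗ |j⟩ ⊗ |L(l, f(i,j))⟩ is absolutely maximally entangled: its reduced density matrices on the three subsystems equal I_{d₁}/d₁, I_{d₂}/d₂, and I_{d₁d₂}/(d₁d₂) respectively. -/

import Mathlib

open Complex

/-- Component of `|φ_{n,m,l}⟩` at `|i⟩⊗|j⟩⊗|r⟩`, with `f(i,j) = d₂·i + j`. -/
noncomputable def phiC2 (d₁ d₂ : ℕ)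
    (L : ZMod (d₁ * d₂) → ZMod (d₁ * d₂) → ZMod (d₁ * d₂))
    (n : ZMod d₁) (m : ZMod d₂) (l : ZMod (d₁ * d₂))
    (i : ZMod d₁) (j : ZMod d₂) (r : ZMod (d₁ * d₂)) : ℂ :=
  ((Real.sqrt (d₁ * d₂) : ℂ))⁻¹ *
    Complex.exp (2 * Real.pi * Complex.I / d₁) ^ (n.val * i.val) *
    Complex.exp (2 * Real.pi * Complex.I / d₂) ^ (m.val * j.val) *
    (if L l (((d₂ * i.val + j.val : ℕ)) : ZMod (d₁ * d₂)) = r then 1 else 0)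

lemma phiC2_aux_exp_conj (d : ℕ) (k : ℕ) :
    Complex.exp (2 * Real.pi * Complex.I / d) ^ k *
      (starRingEnd ℂ) (Complex.exp (2 * Real.pi * Complex.I / d) ^ k) = 1 := by
  rw [map_pow, ← mul_pow, ← Complex.exp_conj, ← Complex.exp_add]
  have : (starRingEnd ℂ) (2 * Real.pi * Complex.I / d) = -(2 * Real.pi * Complex.I / d) := by
    simp [map_div₀, map_mul, map_ofNat, Complex.conj_I]
    ring
  rw [this, add_neg_cancel, Complex.exp_zero, one_pow]

lemma phiC2_aux_c_conj (d₁ d₂ : ℕ) :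
    ((Real.sqrt (d₁ * d₂) : ℂ))⁻¹ * (starRingEnd ℂ) ((Real.sqrt (d₁ * d₂) : ℂ))⁻¹
      = ((d₁ : ℂ) * d₂)⁻¹ := by
  rw [map_inv₀, Complex.conj_ofReal, ← mul_inv, ← Complex.ofReal_mul,
    Real.mul_self_sqrt (by positivity)]
  push_cast
  ring_nf

lemma phiC2_aux_f_inj (d₁ d₂ : ℕ) [NeZero d₁] [NeZero d₂] {i i' : ZMod d₁} {j j' : ZMod d₂}
    (h : ((d₂ * i.val + j.val : ℕ) : ZMod (d₁ * d₂)) = ((d₂ * i'.val + j'.val : ℕ) : ZMod (d₁ * d₂))) :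
    i = i' ∧ j = j' := by
  have hd₂ : 0 < d₂ := Nat.pos_of_ne_zero (NeZero.ne d₂)
  have hb : ∀ (a : ZMod d₁) (b : ZMod d₂), d₂ * a.val + b.val < d₁ * d₂ := by
    intro a b
    have h1 : a.val < d₁ := ZMod.val_lt a
    have h2 : b.val < d₂ := ZMod.val_lt b
    calc d₂ * a.val + b.val < d₂ * a.val + d₂ := by omega
      _ = d₂ * (a.val + 1) := by ring
      _ ≤ d₂ * d₁ := Nat.mul_le_mul_left _ (by omega)
      _ = d₁ * d₂ := Nat.mul_comm _ _
  have hn : d₂ * i.val + j.val = d₂ * i'.val + j'.val := by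
    have := congrArg (ZMod.val) h
    rwa [ZMod.val_cast_of_lt (hb i j), ZMod.val_cast_of_lt (hb i' j')] at this
  have hj : j.val = j'.val := by
    have e1 : (d₂ * i.val + j.val) % d₂ = j.val := by
      rw [Nat.mul_add_mod, Nat.mod_eq_of_lt (ZMod.val_lt j)]
    have e2 : (d₂ * i'.val + j'.val) % d₂ = j'.val := by
      rw [Nat.mul_add_mod, Nat.mod_eq_of_lt (ZMod.val_lt j')]
    rw [← e1, ← e2, hn]
  have hi : i.val = i'.val := by
    have e1 : (d₂ * i.val + j.val) / d₂ = i.val := by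
      rw [Nat.mul_add_div hd₂, Nat.div_eq_of_lt (ZMod.val_lt j), Nat.add_zero]
    have e2 : (d₂ * i'.val + j'.val) / d₂ = i'.val := by
      rw [Nat.mul_add_div hd₂, Nat.div_eq_of_lt (ZMod.val_lt j'), Nat.add_zero]
    rw [← e1, ← e2, hn]
  exact ⟨ZMod.val_injective _ hi, ZMod.val_injective _ hj⟩

/-- Each `|φ_{n,m,l}⟩` is absolutely maximally entangled: its reduced
density matrices on the three subsystems are `I_{d₁}/d₁`, `I_{d₂}/d₂` and
`I_{d₁d₂}/(d₁d₂)`. -/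
theorem phiC2_absolutely_maximally_entangled (d₁ d₂ : ℕ) [NeZero d₁] [NeZero d₂]
    [NeZero (d₁ * d₂)]
    (L : ZMod (d₁ * d₂) → ZMod (d₁ * d₂) → ZMod (d₁ * d₂))
    (hrow : ∀ l, Function.Bijective (L l))
    (hcol : ∀ c, Function.Bijective fun l => L l c)
    (n : ZMod d₁) (m : ZMod d₂) (l : ZMod (d₁ * d₂)) :
    (∀ i i' : ZMod d₁,
      (∑ j : ZMod d₂, ∑ r : ZMod (d₁ * d₂),
        phiC2 d₁ d₂ L n m l i j r * (starRingEnd ℂ) (phiC2 d₁ d₂ L n m l i' j r)) =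
        if i = i' then (d₁ : ℂ)⁻¹ else 0) ∧
    (∀ j j' : ZMod d₂,
      (∑ i : ZMod d₁, ∑ r : ZMod (d₁ * d₂),
        phiC2 d₁ d₂ L n m l i j r * (starRingEnd ℂ) (phiC2 d₁ d₂ L n m l i j' r)) =
        if j = j' then (d₂ : ℂ)⁻¹ else 0) ∧
    (∀ r r' : ZMod (d₁ * d₂),
      (∑ i : ZMod d₁, ∑ j : ZMod d₂,
        phiC2 d₁ d₂ L n m l i j r * (starRingEnd ℂ) (phiC2 d₁ d₂ L n m l i j r')) =
        if r = r' then ((d₁ : ℂ) * d₂)⁻¹ else 0) := by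
  have hd₁ : (d₁ : ℂ) ≠ 0 := Nat.cast_ne_zero.2 (NeZero.ne d₁)
  have hd₂ : (d₂ : ℂ) ≠ 0 := Nat.cast_ne_zero.2 (NeZero.ne d₂)
  -- the "g" map and its injectivity
  set g : ZMod d₁ → ZMod d₂ → ZMod (d₁ * d₂) :=
    fun i j => L l (((d₂ * i.val + j.val : ℕ)) : ZMod (d₁ * d₂)) with hgdef
  have hginj : ∀ {i i' : ZMod d₁} {j j' : ZMod d₂}, g i j = g i' j' → i = i' ∧ j = j' := by
    intro i i' j j' h
    exact phiC2_aux_f_inj d₁ d₂ ((hrow l).1 h)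
  -- pointwise value of the "diagonal" products
  have hsame : ∀ (i : ZMod d₁) (j : ZMod d₂) (r : ZMod (d₁ * d₂)),
      phiC2 d₁ d₂ L n m l i j r * (starRingEnd ℂ) (phiC2 d₁ d₂ L n m l i j r) =
        if g i j = r then ((d₁ : ℂ) * d₂)⁻¹ else 0 := by
    intro i j r
    by_cases h : g i j = r
    · rw [if_pos h]
      simp only [hgdef] at h
      simp only [phiC2, h, eq_self_iff_true, if_true, map_mul, map_one, mul_one]
      calc ((Real.sqrt (d₁ * d₂) : ℂ))⁻¹ * Complex.exp (2 * Real.pi * Complex.I / d₁) ^ (n.val * i.val) *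
            Complex.exp (2 * Real.pi * Complex.I / d₂) ^ (m.val * j.val) *
            ((starRingEnd ℂ) ((Real.sqrt (d₁ * d₂) : ℂ))⁻¹ *
              (starRingEnd ℂ) (Complex.exp (2 * Real.pi * Complex.I / d₁) ^ (n.val * i.val)) *
              (starRingEnd ℂ) (Complex.exp (2 * Real.pi * Complex.I / d₂) ^ (m.val * j.val)))
          = (((Real.sqrt (d₁ * d₂) : ℂ))⁻¹ * (starRingEnd ℂ) ((Real.sqrt (d₁ * d₂) : ℂ))⁻¹) *
            (Complex.exp (2 * Real.pi * Complex.I / d₁) ^ (n.val * i.val) *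
              (starRingEnd ℂ) (Complex.exp (2 * Real.pi * Complex.I / d₁) ^ (n.val * i.val))) *
            (Complex.exp (2 * Real.pi * Complex.I / d₂) ^ (m.val * j.val) *
              (starRingEnd ℂ) (Complex.exp (2 * Real.pi * Complex.I / d₂) ^ (m.val * j.val))) := by
            ring
        _ = ((d₁ : ℂ) * d₂)⁻¹ := by
            rw [phiC2_aux_c_conj, phiC2_aux_exp_conj, phiC2_aux_exp_conj]; ring
    · rw [if_neg h]
      simp only [hgdef] at h
      simp only [phiC2, if_neg h, mul_zero, zero_mul]
  -- pointwise vanishing of off-diagonal products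
  have hzero : ∀ (i i' : ZMod d₁) (j j' : ZMod d₂) (r : ZMod (d₁ * d₂)),
      ¬(i = i' ∧ j = j') →
      phiC2 d₁ d₂ L n m l i j r * (starRingEnd ℂ) (phiC2 d₁ d₂ L n m l i' j' r) = 0 := by
    intro i i' j j' r hne
    by_cases h : g i j = r
    · have h2 : g i' j' ≠ r := fun h2 => hne (hginj (h.trans h2.symm))
      simp only [hgdef] at h2
      simp only [phiC2, if_neg h2, mul_zero, map_zero]
    · simp only [hgdef] at h
      simp only [phiC2, if_neg h, mul_zero, zero_mul]
  refine ⟨?_, ?_, ?_⟩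
  · -- first marginal
    intro i i'
    by_cases h : i = i'
    · subst h
      simp only [hsame, Finset.sum_ite_eq, Finset.mem_univ, if_true, if_pos,
        Finset.sum_const, Finset.card_univ, ZMod.card, nsmul_eq_mul]
      field_simp
    · have hz : ∀ (j : ZMod d₂) (r : ZMod (d₁ * d₂)),
          phiC2 d₁ d₂ L n m l i j r * (starRingEnd ℂ) (phiC2 d₁ d₂ L n m l i' j r) = 0 :=
        fun j r => hzero i i' j j r (fun hh => h hh.1)
      simp [hz, h]
  · -- second marginal
    intro j j'
    by_cases h : j = j'
    · subst h
      simp only [hsame, Finset.sum_ite_eq, Finset.mem_univ, if_true, if_pos,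
        Finset.sum_const, Finset.card_univ, ZMod.card, nsmul_eq_mul]
      field_simp
    · have hz : ∀ (i : ZMod d₁) (r : ZMod (d₁ * d₂)),
          phiC2 d₁ d₂ L n m l i j r * (starRingEnd ℂ) (phiC2 d₁ d₂ L n m l i j' r) = 0 :=
        fun i r => hzero i i j j' r (fun hh => h hh.2)
      simp [hz, h]
  · -- third marginal
    intro r r'
    by_cases h : r = r'
    · subst h
      -- g is surjective as a pair map
      have hFinj : Function.Injective (fun p : ZMod d₁ × ZMod d₂ => g p.1 p.2) := by
        intro p q hpq
        obtain ⟨h1, h2⟩ := hginj hpq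
        exact Prod.ext h1 h2
      have hFsurj : Function.Surjective (fun p : ZMod d₁ × ZMod d₂ => g p.1 p.2) := by
        have : Fintype.card (ZMod d₁ × ZMod d₂) = Fintype.card (ZMod (d₁ * d₂)) := by
          simp [ZMod.card]
        exact (Fintype.bijective_iff_injective_and_card _).2 ⟨hFinj, this⟩ |>.2
      obtain ⟨⟨i₀, j₀⟩, hF⟩ := hFsurj r
      rw [if_pos rfl]
      simp only [hsame]
      rw [Finset.sum_eq_single i₀]
      · rw [Finset.sum_eq_single j₀]
        · rw [if_pos hF]
        · intro j _ hj
          rw [if_neg]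
          intro hc
          exact hj (hginj (hc.trans hF.symm)).2
        · intro hmem; exact absurd (Finset.mem_univ j₀) hmem
      · intro i _ hi
        apply Finset.sum_eq_zero
        intro j _
        rw [if_neg]
        intro hc
        exact hi (hginj (hc.trans hF.symm)).1
      · intro hmem; exact absurd (Finset.mem_univ i₀) hmem
    · have hz : ∀ (i : ZMod d₁) (j : ZMod d₂),
          phiC2 d₁ d₂ L n m l i j r * (starRingEnd ℂ) (phiC2 d₁ d₂ L n m l i j r') = 0 := by
        intro i j
        by_cases hc : g i j = r
        · have h2 : g i j ≠ r' := fun h2 => h (hc.symm.trans h2)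
          simp only [hgdef] at h2
          simp only [phiC2, if_neg h2, mul_zero, map_zero]
        · simp only [hgdef] at hc
          simp only [phiC2, if_neg hc, mul_zero, zero_mul]
      simp [hz, h]
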